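/- For real numbers 0 < p < q ≤ 1, an integer i ≥ 1, and a ∈ ℝ, the set Aᵢ = a · {p,q}^{⊙i} (the scaled i-fold Minkowski product of {p,q}) satisfies diam(Aᵢ) = |a|·(qⁱ − pⁱ) and gap(Aᵢ) = |a|·(q−p)·q^{i−1}. -/
import Mathlib


open Pointwise

/-- The length of the longest bounded interval complementary to `A`:
`gap A = min {ℓ ≥ 0 : A + [0,ℓ] is an interval}`. -/
noncomputable def gap (A : Set ℝ) : ℝ :=
  sInf {ℓ : ℝ | 0 ≤ ℓ ∧ (A + Set.Icc 0 ℓ).OrdConnected}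

lemma pair_pow_eq (p q : ℝ) (i : ℕ) :
    ({p, q} : Set ℝ) ^ i = (fun j => p ^ j * q ^ (i - j)) '' Set.Iic i := by
  induction i with
  | zero =>
    simp [Set.Iic, Set.eq_singleton_iff_unique_mem]
  | succ n ih =>
    have h1 : ({p, q} : Set ℝ) ^ (n + 1) = ({p} ∪ {q}) * ({p, q}) ^ n := by
      rw [pow_succ', Set.insert_eq]
    rw [h1, Set.union_mul, Set.singleton_mul, Set.singleton_mul, ih]
    ext x
    simp only [Set.mem_union, Set.mem_image, Set.mem_Iic]
    constructor
    · rintro (⟨y, ⟨j, hj, rfl⟩, rfl⟩ | ⟨y, ⟨j, hj, rfl⟩, rfl⟩)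
      · refine ⟨j + 1, by omega, ?_⟩
        have h2 : n + 1 - (j + 1) = n - j := by omega
        rw [h2, pow_succ]; ring
      · refine ⟨j, by omega, ?_⟩
        have h2 : n + 1 - j = (n - j) + 1 := by omega
        rw [h2, pow_succ]; ring
    · rintro ⟨j, hj, rfl⟩
      rcases Nat.eq_zero_or_pos j with rfl | hjpos
      · right
        refine ⟨p ^ 0 * q ^ (n - 0), ⟨0, by omega, rfl⟩, ?_⟩
        have h2 : n + 1 - 0 = (n - 0) + 1 := by omega
        rw [h2, pow_succ]; ring
      · left
        obtain ⟨k, rfl⟩ : ∃ k, j = k + 1 := ⟨j - 1, by omega⟩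
        refine ⟨p ^ k * q ^ (n - k), ⟨k, by omega, rfl⟩, ?_⟩
        have h2 : n + 1 - (k + 1) = n - k := by omega
        rw [h2, pow_succ]; ring

lemma pair_pow_eq' (p q : ℝ) (i : ℕ) :
    ({p, q} : Set ℝ) ^ i = (fun j => p ^ (i - j) * q ^ j) '' Set.Iic i := by
  rw [pair_pow_eq]
  ext x
  simp only [Set.mem_image, Set.mem_Iic]
  constructor
  · rintro ⟨j, hj, rfl⟩
    exact ⟨i - j, by omega, by rw [Nat.sub_sub_self hj]⟩
  · rintro ⟨j, hj, rfl⟩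
    exact ⟨i - j, by omega, by rw [Nat.sub_sub_self hj]⟩

lemma key_lemma (n : ℕ) (m : ℕ → ℝ) (g : ℝ) (hg : 0 < g)
    (hlt : ∀ j, j < n → m j < m (j + 1))
    (hle : ∀ j, j < n → m (j + 1) - m j ≤ g)
    (hex : ∃ k, k < n ∧ m (k + 1) - m k = g) :
    Metric.diam (m '' Set.Iic n) = m n - m 0 ∧ gap (m '' Set.Iic n) = g := by
  classical
  have mle : ∀ j j', j ≤ j' → j' ≤ n → m j ≤ m j' := by
    intro j j' hjj
    induction j', hjj using Nat.le_induction with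
    | base => exact fun _ => le_rfl
    | succ k hk ih =>
      intro hkn
      exact (ih (by omega)).trans (hlt k (by omega)).le
  set A := m '' Set.Iic n with hA
  have hsub : A ⊆ Set.Icc (m 0) (m n) := by
    rintro _ ⟨j, hj, rfl⟩
    exact ⟨mle 0 j (Nat.zero_le _) hj, mle j n hj le_rfl⟩
  have hm0 : m 0 ∈ A := ⟨0, Set.mem_Iic.mpr (Nat.zero_le _), rfl⟩
  have hmn : m n ∈ A := ⟨n, Set.mem_Iic.mpr le_rfl, rfl⟩
  have h0n : m 0 ≤ m n := mle 0 n (Nat.zero_le _) le_rfl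
  constructor
  · apply le_antisymm
    · calc Metric.diam A ≤ Metric.diam (Set.Icc (m 0) (m n)) :=
            Metric.diam_mono hsub (Metric.isBounded_Icc _ _)
        _ = m n - m 0 := Real.diam_Icc h0n
    · have := Metric.dist_le_diam_of_mem ((Metric.isBounded_Icc _ _).subset hsub) hmn hm0
      rwa [Real.dist_eq, abs_of_nonneg (by linarith)] at this
  · have hB : A + Set.Icc 0 g = Set.Icc (m 0) (m n + g) := by
      ext z
      constructor
      · rintro hz
        rw [Set.mem_add] at hz
        obtain ⟨x, ⟨j, hj, rfl⟩, s, hs, rfl⟩ := hz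
        have h1 := mle 0 j (Nat.zero_le _) hj
        have h2 := mle j n hj le_rfl
        exact ⟨by linarith [hs.1], by linarith [hs.2]⟩
      · rintro ⟨hz1, hz2⟩
        obtain ⟨j, hjn, hjz, hznot⟩ :
            ∃ j, j ≤ n ∧ m j ≤ z ∧ (j < n → z < m (j + 1)) := by
          refine ⟨Nat.findGreatest (fun x => m x ≤ z) n, Nat.findGreatest_le n,
            Nat.findGreatest_spec (P := fun x => m x ≤ z) (Nat.zero_le n) hz1,
            fun hjlt => ?_⟩
          have hnot := Nat.findGreatest_is_greatest
            (k := Nat.findGreatest (fun x => m x ≤ z) n + 1)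
            (P := fun x => m x ≤ z) (n := n) (by omega) (by omega)
          simpa using hnot
        have hzj : z ≤ m j + g := by
          rcases Nat.eq_or_lt_of_le hjn with rfl | hjlt
          · linarith
          · have h3 := hznot hjlt
            have := hle j hjlt
            linarith
        rw [Set.mem_add]
        exact ⟨m j, ⟨j, Set.mem_Iic.mpr hjn, rfl⟩, z - m j,
          ⟨by linarith, by linarith⟩, by ring⟩
    apply IsLeast.csInf_eq
    constructor
    · exact ⟨hg.le, by rw [hB]; exact Set.ordConnected_Icc⟩
    · rintro b ⟨hb0, hbc⟩
      by_contra hcon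
      push_neg at hcon
      obtain ⟨k, hkn, hkg⟩ := hex
      have hmk : m k ∈ A := ⟨k, Set.mem_Iic.mpr hkn.le, rfl⟩
      have hmk1 : m (k + 1) ∈ A := ⟨k + 1, Set.mem_Iic.mpr (by omega), rfl⟩
      have hb : (0:ℝ) ∈ Set.Icc (0:ℝ) b := Set.mem_Icc.mpr ⟨le_rfl, hb0⟩
      have hu : m k ∈ A + Set.Icc 0 b := by simpa using Set.add_mem_add hmk hb
      have hv : m (k + 1) ∈ A + Set.Icc 0 b := by simpa using Set.add_mem_add hmk1 hb
      have hw : m k + (b + g) / 2 ∈ A + Set.Icc 0 b := by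
        apply hbc.out hu hv
        constructor
        · linarith
        · linarith
      rw [Set.mem_add] at hw
      obtain ⟨x, ⟨j', hj', rfl⟩, s, hs, heq⟩ := hw
      have hgt : m k < m j' := by linarith [hs.2]
      have hjk : k + 1 ≤ j' := by
        by_contra hh
        push_neg at hh
        have := mle j' k (by omega) (by omega)
        linarith
      have := mle (k + 1) j' hjk hj'
      linarith [hs.1]

theorem diam_gap_scaled_pair_pow (p q : ℝ) (hp : 0 < p) (hpq : p < q) (hq : q ≤ 1)
    (i : ℕ) (hi : 1 ≤ i) (a : ℝ) :
    Metric.diam (a • (({p, q} : Set ℝ) ^ i)) = |a| * (q ^ i - p ^ i) ∧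
    gap (a • (({p, q} : Set ℝ) ^ i)) = |a| * (q - p) * q ^ (i - 1) := by
  have hq0 : 0 < q := hp.trans hpq
  have hsmul : ∀ (f : ℕ → ℝ), a • ((fun j => f j) '' Set.Iic i)
      = (fun j => a * f j) '' Set.Iic i := by
    intro f
    ext x
    simp only [Set.mem_smul_set, Set.mem_image, Set.mem_Iic, smul_eq_mul]
    constructor
    · rintro ⟨y, ⟨j, hj, rfl⟩, rfl⟩; exact ⟨j, hj, rfl⟩
    · rintro ⟨j, hj, rfl⟩; exact ⟨f j, ⟨j, hj, rfl⟩, rfl⟩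
  rcases lt_trichotomy a 0 with ha | rfl | ha
  · -- a < 0 : use increasing enumeration m j = a * p^j * q^(i-j)
    have hAeq : a • (({p, q} : Set ℝ) ^ i)
        = (fun j => a * (p ^ j * q ^ (i - j))) '' Set.Iic i := by
      rw [pair_pow_eq p q i]; exact hsmul _
    have habs : |a| = -a := abs_of_neg ha
    set g := |a| * (q - p) * q ^ (i - 1) with hgdef
    have hg : 0 < g := by
      apply mul_pos (mul_pos (by rw [habs]; linarith) (by linarith))
      positivity
    have hlt : ∀ j, j < i → a * (p ^ j * q ^ (i - j)) < a * (p ^ (j+1) * q ^ (i - (j+1))) := by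
      intro j hj
      have h1 : i - j = (i - (j + 1)) + 1 := by omega
      have hp1 : (0:ℝ) < p ^ j := by positivity
      have hq1 : (0:ℝ) < q ^ (i - (j+1)) := by positivity
      have ht : p ^ (j+1) * q ^ (i - (j+1)) < p ^ j * q ^ (i - j) := by
        rw [h1, pow_succ, pow_succ]
        linarith [mul_lt_mul_of_pos_left hpq (mul_pos hp1 hq1)]
      exact mul_lt_mul_of_neg_left ht ha
    have hle : ∀ j, j < i →
        a * (p ^ (j+1) * q ^ (i - (j+1))) - a * (p ^ j * q ^ (i - j)) ≤ g := by
      intro j hj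
      have h1 : i - j = (i - (j + 1)) + 1 := by omega
      have h2 : i - 1 = j + (i - (j + 1)) := by omega
      have hpj : p ^ j ≤ q ^ j := pow_le_pow_left₀ hp.le hpq.le j
      have hqd : (0:ℝ) < q ^ (i - (j+1)) := by positivity
      have key : p ^ j * q ^ (i - (j+1)) * (q - p) ≤ q ^ j * q ^ (i - (j+1)) * (q - p) :=
        mul_le_mul_of_nonneg_right (mul_le_mul_of_nonneg_right hpj hqd.le) (by linarith)
      have key2 := mul_le_mul_of_nonneg_left key (neg_nonneg.mpr ha.le)
      rw [h1, pow_succ, pow_succ, hgdef, habs, h2, pow_add]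
      nlinarith [key2]
    have hex : a * (p ^ (0+1) * q ^ (i - (0+1))) - a * (p ^ 0 * q ^ (i - 0)) = g := by
      have h1 : i - 0 = (i - 1) + 1 := by omega
      rw [h1, hgdef, habs, pow_succ]
      simp only [zero_add, pow_one, pow_zero, one_mul]
      ring
    obtain ⟨hd, hgp⟩ := key_lemma i (fun j => a * (p ^ j * q ^ (i - j))) g hg hlt hle
      ⟨0, by omega, hex⟩
    rw [hAeq, hd, hgp]
    refine ⟨?_, rfl⟩
    simp only [pow_zero, one_mul, Nat.sub_zero, Nat.sub_self, mul_one]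
    rw [habs]; ring
  · -- a = 0
    have hne : (({p, q} : Set ℝ) ^ i).Nonempty := by
      rw [pair_pow_eq]
      exact ⟨p ^ i * q ^ (i - i), ⟨i, Set.mem_Iic.mpr le_rfl, rfl⟩⟩
    rw [Set.zero_smul_set hne]
    have h0 : ((0 : Set ℝ) : Set ℝ) = {0} := rfl
    constructor
    · simp [h0]
    · rw [h0]
      simp only [abs_zero, zero_mul]
      apply IsLeast.csInf_eq
      constructor
      · refine ⟨le_rfl, ?_⟩
        have h5 : ({(0:ℝ)} : Set ℝ) + Set.Icc 0 0 = {0} := by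
          simp [Set.Icc_self]
        rw [h5]
        exact Set.ordConnected_singleton
      · rintro b ⟨hb0, _⟩; exact hb0
  · -- a > 0 : use increasing enumeration m j = a * p^(i-j) * q^j
    have hAeq : a • (({p, q} : Set ℝ) ^ i)
        = (fun j => a * (p ^ (i - j) * q ^ j)) '' Set.Iic i := by
      rw [pair_pow_eq' p q i]; exact hsmul _
    have habs : |a| = a := abs_of_pos ha
    set g := |a| * (q - p) * q ^ (i - 1) with hgdef
    have hg : 0 < g := by
      apply mul_pos (mul_pos (by rw [habs]; linarith) (by linarith))
      positivity
    have hlt : ∀ j, j < i → a * (p ^ (i - j) * q ^ j) < a * (p ^ (i - (j+1)) * q ^ (j+1)) := by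
      intro j hj
      have h1 : i - j = (i - (j + 1)) + 1 := by omega
      have hpd : (0:ℝ) < p ^ (i - (j+1)) := by positivity
      have hqj : (0:ℝ) < q ^ j := by positivity
      have ht : p ^ (i - j) * q ^ j < p ^ (i - (j+1)) * q ^ (j+1) := by
        rw [h1, pow_succ, pow_succ]
        linarith [mul_lt_mul_of_pos_left hpq (mul_pos hpd hqj)]
      exact mul_lt_mul_of_pos_left ht ha
    have hle : ∀ j, j < i →
        a * (p ^ (i - (j+1)) * q ^ (j+1)) - a * (p ^ (i - j) * q ^ j) ≤ g := by
      intro j hj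
      have h1 : i - j = (i - (j + 1)) + 1 := by omega
      have h2 : i - 1 = (i - (j + 1)) + j := by omega
      have hpd : p ^ (i - (j+1)) ≤ q ^ (i - (j+1)) := pow_le_pow_left₀ hp.le hpq.le _
      have hqj : (0:ℝ) < q ^ j := by positivity
      have key : a * q ^ j * (q - p) * p ^ (i - (j+1)) ≤ a * q ^ j * (q - p) * q ^ (i - (j+1)) :=
        mul_le_mul_of_nonneg_left hpd
          (mul_nonneg (mul_nonneg ha.le hqj.le) (by linarith))
      rw [h1, pow_succ, pow_succ, hgdef, habs, h2, pow_add]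
      nlinarith [key]
    have hex : a * (p ^ (i - ((i-1)+1)) * q ^ ((i-1)+1)) - a * (p ^ (i - (i-1)) * q ^ (i-1)) = g := by
      have h1 : i - ((i-1)+1) = 0 := by omega
      have h2 : i - (i - 1) = 1 := by omega
      rw [h1, h2, hgdef, habs, pow_succ]
      simp only [pow_zero, one_mul, pow_one]
      ring
    obtain ⟨hd, hgp⟩ := key_lemma i (fun j => a * (p ^ (i - j) * q ^ j)) g hg hlt hle
      ⟨i - 1, by omega, hex⟩
    rw [hAeq, hd, hgp]
    refine ⟨?_, rfl⟩
    simp only [Nat.sub_self, pow_zero, one_mul, Nat.sub_zero, mul_one]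
    rw [habs]; ring
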